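/- For D_i > 4 D_g ≥ 0 and λ > 0, with D(U) = D_i(1-4U+3U²)+D_g(4U-3U²), R(U) = λU(1-U), and β the larger root of D in (0,1), the strict inequality 2√(λ D_i) > 2√(D'(β) R(β)) holds, where D'(β) R(β) = 3λ(D_i - D_g)β(1-β)(β-α). -/

import Mathlib

theorem speed_threshold_ordering (lam Di Dg : ℝ) (hlam : 0 < lam)
    (hDg : 0 ≤ Dg) (h : Di > 4 * Dg)
    (D R : ℝ → ℝ)
    (hD : ∀ U, D U = Di * (1 - 4 * U + 3 * U ^ 2) + Dg * (4 * U - 3 * U ^ 2))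
    (hR : ∀ U, R U = lam * U * (1 - U))
    (α β : ℝ)
    (hα : α = 2 / 3 - Real.sqrt (Di ^ 2 + 4 * Dg ^ 2 - 5 * Di * Dg) / (3 * (Di - Dg)))
    (hβ : β = 2 / 3 + Real.sqrt (Di ^ 2 + 4 * Dg ^ 2 - 5 * Di * Dg) / (3 * (Di - Dg))) :
    deriv D β * R β = 3 * lam * (Di - Dg) * β * (1 - β) * (β - α) ∧
    2 * Real.sqrt (lam * Di) > 2 * Real.sqrt (deriv D β * R β) := by
  have hDfun : D = fun U => Di * (1 - 4 * U + 3 * U ^ 2) + Dg * (4 * U - 3 * U ^ 2) :=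
    funext hD
  subst hDfun
  set s := Real.sqrt (Di ^ 2 + 4 * Dg ^ 2 - 5 * Di * Dg) with hs
  have hd : 0 < Di - Dg := by linarith
  have hDi : 0 < Di := by linarith
  have hs2 : s ^ 2 = Di ^ 2 + 4 * Dg ^ 2 - 5 * Di * Dg := by
    rw [hs]; exact Real.sq_sqrt (by nlinarith)
  have hs0 : 0 ≤ s := Real.sqrt_nonneg _
  -- derivative
  have h1 : HasDerivAt (fun U : ℝ => U) 1 β := hasDerivAt_id β
  have h2 : HasDerivAt (fun U : ℝ => U ^ 2) (2 * β) β := by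
    simpa using hasDerivAt_pow (n := 2) (x := β)
  have hA : HasDerivAt (fun U : ℝ => 1 - 4 * U + 3 * U ^ 2) (-(4 * 1) + 3 * (2 * β)) β :=
    ((h1.const_mul 4).const_sub 1).add (h2.const_mul 3)
  have hB : HasDerivAt (fun U : ℝ => 4 * U - 3 * U ^ 2) (4 * 1 - 3 * (2 * β)) β :=
    (h1.const_mul 4).sub (h2.const_mul 3)
  have hder : deriv (fun U : ℝ => Di * (1 - 4 * U + 3 * U ^ 2) + Dg * (4 * U - 3 * U ^ 2)) β
      = (6 * β - 4) * (Di - Dg) := by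
    have := ((hA.const_mul Di).add (hB.const_mul Dg)).deriv
    exact this.trans (by ring)
  have hbval : β = 2 / 3 + s / (3 * (Di - Dg)) := hβ
  have hds : (3 : ℝ) * (Di - Dg) ≠ 0 := by positivity
  have hderval : (6 * β - 4) * (Di - Dg) = 2 * s := by
    rw [hbval]; field_simp; ring
  have hP : deriv (fun U : ℝ => Di * (1 - 4 * U + 3 * U ^ 2) + Dg * (4 * U - 3 * U ^ 2)) β * R β
      = 2 * s * lam * (β * (1 - β)) := by
    rw [hder, hderval, hR]; ring
  have hab : β - α = 2 * s / (3 * (Di - Dg)) := by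
    rw [hα, hβ]; ring
  constructor
  · rw [hP, hab]; field_simp
  · -- key polynomial inequality
    have key : (0:ℝ) < 9 * (Di - Dg) * Di + 2 * s ^ 2 - 2 * s * (Di + 2 * Dg) := by
      nlinarith [sq_nonneg (s - (Di + 2 * Dg)), hs2, mul_pos hDi (show (0:ℝ) < Di - 2 * Dg by linarith)]
    have hs3 : s * s ^ 2 = s * (Di ^ 2 + 4 * Dg ^ 2 - 5 * Di * Dg) := by rw [hs2]
    have key2 : 9 * (Di - Dg) ^ 2 * Di > 2 * s * ((2 * (Di - Dg) + s) * ((Di - Dg) - s)) := by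
      nlinarith [mul_pos hd key, hs3, hs2]
    have hβval : β * (1 - β) * (9 * (Di - Dg) ^ 2)
        = (2 * (Di - Dg) + s) * ((Di - Dg) - s) := by
      rw [hbval]; field_simp; ring
    have h9 : (0:ℝ) < 9 * (Di - Dg) ^ 2 := by positivity
    have hlt : 2 * s * (β * (1 - β)) < Di := by
      have hmul : (2 * s * (β * (1 - β))) * (9 * (Di - Dg) ^ 2)
          = 2 * s * ((2 * (Di - Dg) + s) * ((Di - Dg) - s)) := by
        rw [← hβval]; ring
      have : (2 * s * (β * (1 - β))) * (9 * (Di - Dg) ^ 2) < Di * (9 * (Di - Dg) ^ 2) := by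
        rw [hmul]; linarith
      exact lt_of_mul_lt_mul_right this h9.le
    have hsled : s ≤ Di - Dg := by
      have h1 : Di ^ 2 + 4 * Dg ^ 2 - 5 * Di * Dg ≤ (Di - Dg) ^ 2 := by
        nlinarith [mul_nonneg hDg hd.le]
      calc s ≤ Real.sqrt ((Di - Dg) ^ 2) := Real.sqrt_le_sqrt h1
        _ = Di - Dg := Real.sqrt_sq hd.le
    have hbb : 0 ≤ β * (1 - β) := by
      have : 0 ≤ (2 * (Di - Dg) + s) * ((Di - Dg) - s) := by
        apply mul_nonneg <;> linarith
      nlinarith [hβval]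
    have hPnn : 0 ≤ 2 * s * lam * (β * (1 - β)) := by positivity
    have hPlt : 2 * s * lam * (β * (1 - β)) < lam * Di := by
      calc 2 * s * lam * (β * (1 - β)) = lam * (2 * s * (β * (1 - β))) := by ring
        _ < lam * Di := by exact mul_lt_mul_of_pos_left hlt hlam
    rw [hP]
    have := Real.sqrt_lt_sqrt hPnn hPlt
    linarith
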